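/- The category StGrphs of multigraphs with strict graph morphisms is balanced: every morphism that is both a monomorphism and an epimorphism is an isomorphism (i.e., has a two-sided inverse strict graph morphism). -/
import Mathlib


/-- A multigraph: a vertex type, an edge type, and an incidence function
assigning to each edge an unordered pair of vertices. -/
structure Multigraph : Type 1 where
  V : Type
  E : Type
  ψ : E → Sym2 V

namespace Multigraph

/-- The part set of a multigraph: vertices together with edges. -/
abbrev Part (G : Multigraph) : Type := G.V ⊕ G.E

/-- The incidence function extended to parts: a vertex `v` is incident to `{v,v}`. -/
def incid (G : Multigraph) : G.Part → Sym2 G.V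
  | Sum.inl v => s(v, v)
  | Sum.inr e => G.ψ e

/-- A graph morphism: a function on part sets mapping vertices to vertices and
preserving incidence.  (The vertex map is recorded separately, but it is uniquely
determined by the part map.) -/
@[ext]
structure Hom (G H : Multigraph) where
  partMap : G.Part → H.Part
  vertMap : G.V → H.V
  partMap_vert : ∀ v : G.V, partMap (Sum.inl v) = Sum.inl (vertMap v)
  incid_partMap : ∀ p : G.Part, H.incid (partMap p) = (G.incid p).map vertMap

/-- The identity graph morphism. -/
def Hom.id (G : Multigraph) : Hom G G where
  partMap := _root_.id
  vertMap := _root_.id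
  partMap_vert := fun _ => rfl
  incid_partMap := fun p => by simp

/-- Composition of graph morphisms. -/
def Hom.comp {G H K : Multigraph} (g : Hom H K) (f : Hom G H) : Hom G K where
  partMap := g.partMap ∘ f.partMap
  vertMap := g.vertMap ∘ f.vertMap
  partMap_vert := fun v => by simp [f.partMap_vert, g.partMap_vert]
  incid_partMap := fun p => by
    simp [Function.comp, g.incid_partMap, f.incid_partMap, Sym2.map_map]

/-- A strict graph morphism: a graph morphism that moreover maps edges to edges. -/
@[ext]
structure StrictHom (G H : Multigraph) extends Hom G H where
  edgeMap : G.E → H.E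
  partMap_edge : ∀ e : G.E, partMap (Sum.inr e) = Sum.inr (edgeMap e)

/-- The identity strict graph morphism. -/
def StrictHom.id (G : Multigraph) : StrictHom G G where
  toHom := Hom.id G
  edgeMap := _root_.id
  partMap_edge := fun _ => rfl

/-- Composition of strict graph morphisms. -/
def StrictHom.comp {G H K : Multigraph} (g : StrictHom H K) (f : StrictHom G H) :
    StrictHom G K where
  toHom := g.toHom.comp f.toHom
  edgeMap := g.edgeMap ∘ f.edgeMap
  partMap_edge := fun e => by
    simp [Hom.comp, f.partMap_edge, g.partMap_edge]

end Multigraph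

namespace Multigraph

theorem StrictHom.ext_part {G H : Multigraph} {g h : StrictHom G H}
    (hp : g.partMap = h.partMap) : g = h := by
  have hv : g.vertMap = h.vertMap := by
    funext v
    have := congrFun hp (Sum.inl v)
    rw [g.partMap_vert, h.partMap_vert] at this
    exact Sum.inl.inj this
  have he : g.edgeMap = h.edgeMap := by
    funext e
    have := congrFun hp (Sum.inr e)
    rw [g.partMap_edge, h.partMap_edge] at this
    exact Sum.inr.inj this
  cases g with
  | mk tg eg pg =>
    cases h with
    | mk th eh ph =>
      cases tg; cases th
      simp_all

theorem StrictHom.psi_edgeMap {G H : Multigraph} (f : StrictHom G H) (e : G.E) :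
    H.ψ (f.edgeMap e) = (G.ψ e).map f.vertMap := by
  have := f.incid_partMap (Sum.inr e)
  rw [f.partMap_edge] at this
  exact this

end Multigraph

open Multigraph in
/-- The category **StGrphs** is balanced: a morphism that is both a monomorphism and an
epimorphism is an isomorphism, i.e. has a two-sided inverse strict graph morphism. -/
theorem stgrphs_balanced (A B : Multigraph) (f : StrictHom A B)
    (hmono : ∀ (C : Multigraph) (g h : StrictHom C A), f.comp g = f.comp h → g = h)
    (hepi : ∀ (C : Multigraph) (g h : StrictHom B C), g.comp f = h.comp f → g = h) :
    ∃ g : StrictHom B A, g.comp f = StrictHom.id A ∧ f.comp g = StrictHom.id B := by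
  classical
  -- vertex injectivity
  have vinj : Function.Injective f.vertMap := by
    intro a b hab
    let C : Multigraph := ⟨PUnit, Empty, Empty.elim⟩
    let mk : A.V → StrictHom C A := fun v =>
      { partMap := fun _ => Sum.inl v
        vertMap := fun _ => v
        partMap_vert := fun _ => rfl
        incid_partMap := fun p => by
          cases p with
          | inl u => simp [Multigraph.incid, C]
          | inr e => exact e.elim
        edgeMap := Empty.elim
        partMap_edge := fun e => e.elim }
    have h := hmono C (mk a) (mk b) (by
      apply StrictHom.ext_part
      funext p
      cases p with
      | inl u =>
          show (f.comp (mk a)).partMap (Sum.inl u) = (f.comp (mk b)).partMap (Sum.inl u)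
          simp [StrictHom.comp, Hom.comp, mk, f.partMap_vert, hab]
      | inr e => exact e.elim)
    exact congrArg (fun g => g.vertMap PUnit.unit) h
  -- edge injectivity
  have einj : Function.Injective f.edgeMap := by
    intro e₁ e₂ hee
    have hψ : A.ψ e₁ = A.ψ e₂ := by
      apply Sym2.map.injective vinj
      rw [← f.psi_edgeMap, ← f.psi_edgeMap, hee]
    let C : Multigraph := ⟨A.V, PUnit, fun _ => A.ψ e₁⟩
    let mk : (e : A.E) → A.ψ e = A.ψ e₁ → StrictHom C A := fun e he =>
      { partMap := Sum.map _root_.id (fun _ => e)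
        vertMap := _root_.id
        partMap_vert := fun _ => rfl
        incid_partMap := fun p => by
          cases p with
          | inl u => simp [Multigraph.incid]
          | inr u => simp [Multigraph.incid, C, he]
        edgeMap := fun _ => e
        partMap_edge := fun _ => rfl }
    have h := hmono C (mk e₁ rfl) (mk e₂ hψ.symm) (by
      apply StrictHom.ext_part
      funext p
      cases p with
      | inl u => rfl
      | inr u =>
          show (f.comp (mk e₁ rfl)).partMap (Sum.inr u) = (f.comp (mk e₂ hψ.symm)).partMap (Sum.inr u)
          simp [StrictHom.comp, Hom.comp, mk, f.partMap_edge, hee])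
    exact congrArg (fun g => g.edgeMap PUnit.unit) h
  -- surjectivity via quotient (cokernel pair) graph
  let rv : B.V ⊕ B.V → B.V ⊕ B.V → Prop := fun x y =>
    ∃ a, x = Sum.inl (f.vertMap a) ∧ y = Sum.inr (f.vertMap a)
  let re : B.E ⊕ B.E → B.E ⊕ B.E → Prop := fun x y =>
    ∃ a, x = Sum.inl (f.edgeMap a) ∧ y = Sum.inr (f.edgeMap a)
  have hmkv : ∀ a : A.V, Quot.mk rv (Sum.inl (f.vertMap a)) = Quot.mk rv (Sum.inr (f.vertMap a)) :=
    fun a => Quot.sound ⟨a, rfl, rfl⟩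
  let C : Multigraph :=
    { V := Quot rv
      E := Quot re
      ψ := Quot.lift
        (fun x => match x with
          | Sum.inl e => (B.ψ e).map (Quot.mk rv ∘ Sum.inl)
          | Sum.inr e => (B.ψ e).map (Quot.mk rv ∘ Sum.inr))
        (by
          rintro x y ⟨a, rfl, rfl⟩
          show (B.ψ (f.edgeMap a)).map (Quot.mk rv ∘ Sum.inl)
              = (B.ψ (f.edgeMap a)).map (Quot.mk rv ∘ Sum.inr)
          rw [f.psi_edgeMap, Sym2.map_map, Sym2.map_map]
          congr 1
          funext v
          exact hmkv v) }
  let gq : StrictHom B C :=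
    { partMap := Sum.map (Quot.mk rv ∘ Sum.inl) (Quot.mk re ∘ Sum.inl)
      vertMap := Quot.mk rv ∘ Sum.inl
      partMap_vert := fun _ => rfl
      edgeMap := Quot.mk re ∘ Sum.inl
      partMap_edge := fun _ => rfl
      incid_partMap := fun p => by
        cases p with
        | inl v => simp [Multigraph.incid]
        | inr e => simp [Multigraph.incid, C] }
  let hq : StrictHom B C :=
    { partMap := Sum.map (Quot.mk rv ∘ Sum.inr) (Quot.mk re ∘ Sum.inr)
      vertMap := Quot.mk rv ∘ Sum.inr
      partMap_vert := fun _ => rfl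
      edgeMap := Quot.mk re ∘ Sum.inr
      partMap_edge := fun _ => rfl
      incid_partMap := fun p => by
        cases p with
        | inl v => simp [Multigraph.incid]
        | inr e => simp [Multigraph.incid, C] }
  have hgh : gq = hq := by
    apply hepi
    apply StrictHom.ext_part
    funext p
    cases p with
    | inl v =>
        show (gq.comp f).partMap (Sum.inl v) = (hq.comp f).partMap (Sum.inl v)
        simp only [StrictHom.comp, Hom.comp, Function.comp_apply, f.partMap_vert]
        exact congrArg Sum.inl (hmkv v)
    | inr e =>
        show (gq.comp f).partMap (Sum.inr e) = (hq.comp f).partMap (Sum.inr e)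
        simp only [StrictHom.comp, Hom.comp, Function.comp_apply, f.partMap_edge]
        exact congrArg Sum.inr (Quot.sound ⟨e, rfl, rfl⟩)
  have vsurj : Function.Surjective f.vertMap := by
    intro v
    have h1 : Quot.mk rv (Sum.inl v) = Quot.mk rv (Sum.inr v) :=
      congrArg (fun g : StrictHom B C => g.vertMap v) hgh
    have h2 := congrArg (Quot.lift
      (fun x => match x with
        | Sum.inl _ => True
        | Sum.inr w => w ∈ Set.range f.vertMap)
      (by
        rintro x y ⟨a, rfl, rfl⟩
        exact (eq_true ⟨a, rfl⟩).symm)) h1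
    simp only at h2
    exact cast h2 trivial
  have esurj : Function.Surjective f.edgeMap := by
    intro e
    have h1 : Quot.mk re (Sum.inl e) = Quot.mk re (Sum.inr e) :=
      congrArg (fun g : StrictHom B C => g.edgeMap e) hgh
    have h2 := congrArg (Quot.lift
      (fun x => match x with
        | Sum.inl _ => True
        | Sum.inr w => w ∈ Set.range f.edgeMap)
      (by
        rintro x y ⟨a, rfl, rfl⟩
        exact (eq_true ⟨a, rfl⟩).symm)) h1
    simp only at h2
    exact cast h2 trivial
  -- construct the inverse
  let vE : A.V ≃ B.V := Equiv.ofBijective f.vertMap ⟨vinj, vsurj⟩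
  let eE : A.E ≃ B.E := Equiv.ofBijective f.edgeMap ⟨einj, esurj⟩
  have hψinv : ∀ e : B.E, A.ψ (eE.symm e) = (B.ψ e).map vE.symm := by
    intro e
    have h1 : B.ψ (f.edgeMap (eE.symm e)) = (A.ψ (eE.symm e)).map f.vertMap :=
      f.psi_edgeMap _
    have h2 : f.edgeMap (eE.symm e) = e := eE.apply_symm_apply e
    rw [h2] at h1
    rw [h1, Sym2.map_map]
    have : vE.symm ∘ f.vertMap = _root_.id := by
      funext x
      exact vE.symm_apply_apply x
    rw [this, Sym2.map_id]
    rfl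
  let ginv : StrictHom B A :=
    { partMap := Sum.map vE.symm eE.symm
      vertMap := vE.symm
      partMap_vert := fun _ => rfl
      edgeMap := eE.symm
      partMap_edge := fun _ => rfl
      incid_partMap := fun p => by
        cases p with
        | inl v => simp [Multigraph.incid]
        | inr e => simpa [Multigraph.incid] using hψinv e }
  refine ⟨ginv, ?_, ?_⟩
  · apply StrictHom.ext_part
    funext p
    cases p with
    | inl v =>
        show (ginv.comp f).partMap (Sum.inl v) = Sum.inl v
        simp only [StrictHom.comp, Hom.comp, Function.comp_apply, f.partMap_vert]
        exact congrArg Sum.inl (vE.symm_apply_apply v)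
    | inr e =>
        show (ginv.comp f).partMap (Sum.inr e) = Sum.inr e
        simp only [StrictHom.comp, Hom.comp, Function.comp_apply, f.partMap_edge]
        exact congrArg Sum.inr (eE.symm_apply_apply e)
  · apply StrictHom.ext_part
    funext p
    cases p with
    | inl v =>
        show (f.comp ginv).partMap (Sum.inl v) = Sum.inl v
        simp only [StrictHom.comp, Hom.comp, Function.comp_apply]
        show f.partMap (Sum.inl (vE.symm v)) = Sum.inl v
        rw [f.partMap_vert]
        exact congrArg Sum.inl (vE.apply_symm_apply v)
    | inr e =>
        show (f.comp ginv).partMap (Sum.inr e) = Sum.inr e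
        simp only [StrictHom.comp, Hom.comp, Function.comp_apply]
        show f.partMap (Sum.inr (eE.symm e)) = Sum.inr e
        rw [f.partMap_edge]
        exact congrArg Sum.inr (eE.apply_symm_apply e)
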